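/- Let I be a maximal commuting family of L = {0,...,n-1} and fix a losing-side map b̄ as above. For each I ∈ I, the set I_b̄ := I \ ⋃_{J ∈ I, J ⊊ I} b̄(J) has exactly two elements. -/
import Mathlib


open Finset

/-- A commuting family of subsets of `L`. -/
def IsCommFamOn {α : Type*} [DecidableEq α] (L : Finset α) (F : Finset (Finset α)) : Prop :=
  (∀ I ∈ F, I ⊆ L) ∧ (∀ I ∈ F, 1 < I.card) ∧
    ∀ I ∈ F, ∀ J ∈ F, I ≠ J → Disjoint I J ∨ I ⊂ J ∨ J ⊂ I

/-- A maximal commuting family of `L`. -/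
def IsMaxCommFamOn {α : Type*} [DecidableEq α] (L : Finset α) (F : Finset (Finset α)) : Prop :=
  IsCommFamOn L F ∧ ∀ G, IsCommFamOn L G → F ⊆ G → G = F

/-- `b` is a losing-side map on the family `F`: for each `I ∈ F` it selects one
part of a partition `I = b(I) ⊔ (I ∖ b(I))` into two members of
`F ∪ {singletons}`. -/
def IsLosingMap {α : Type*} [DecidableEq α] (F : Finset (Finset α))
    (b : Finset α → Finset α) : Prop :=
  ∀ I ∈ F, b I ⊆ I ∧ (b I).Nonempty ∧ b I ≠ I ∧
    (b I ∈ F ∨ (b I).card = 1) ∧ ((I \ b I) ∈ F ∨ (I \ b I).card = 1)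

/-- Every member of the family properly contained in `I` lies entirely in one
of the two sides of the partition of `I`. -/
lemma split_lemma {α : Type*} [DecidableEq α] {L : Finset α} {F : Finset (Finset α)}
    (hF : IsCommFamOn L F) {b : Finset α → Finset α} (hb : IsLosingMap F b)
    {I J : Finset α} (hI : I ∈ F) (hJ : J ∈ F) (hJI : J ⊂ I) :
    J ⊆ b I ∨ J ⊆ I \ b I := by
  obtain ⟨hsub, hne, hneq, hA, hB⟩ := hb I hI
  by_contra hcon
  push_neg at hcon
  obtain ⟨h1, h2⟩ := hcon
  obtain ⟨x, hxJ, hxA⟩ := not_subset.mp h1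
  obtain ⟨y, hyJ, hyB⟩ := not_subset.mp h2
  have hxB : x ∈ I \ b I := mem_sdiff.mpr ⟨hJI.1 hxJ, hxA⟩
  have hyA : y ∈ b I := by
    by_contra h
    exact hyB (mem_sdiff.mpr ⟨hJI.1 hyJ, h⟩)
  have hcard := hF.2.1 J hJ
  have hIunion : I = b I ∪ (I \ b I) := (Finset.union_sdiff_of_subset hsub).symm
  have hnotIJ : ¬ I ⊆ J := fun h => hJI.2 h
  have hJB : J ≠ I \ b I := fun h => by
    have : y ∈ I \ b I := h ▸ hyJ
    exact (mem_sdiff.mp this).2 hyA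
  rcases hA with hAF | hA1
  · have hJA : J ≠ b I := fun h => hxA (h ▸ hxJ)
    rcases hF.2.2 J hJ (b I) hAF hJA with hd | hss | hss
    · exact absurd hyA (Finset.disjoint_left.mp hd hyJ)
    · exact hxA (hss.1 hxJ)
    · rcases hB with hBF | hB1
      · rcases hF.2.2 J hJ (I \ b I) hBF hJB with hd | h2s | h2s
        · exact absurd hxB (Finset.disjoint_left.mp hd hxJ)
        · exact (mem_sdiff.mp (h2s.1 hyJ)).2 hyA
        · exact hnotIJ (by rw [hIunion]; exact union_subset hss.1 h2s.1)
      · obtain ⟨z, hz⟩ := Finset.card_eq_one.mp hB1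
        have hzJ : z ∈ J := by
          have hx' : x ∈ ({z} : Finset α) := hz ▸ hxB
          exact (mem_singleton.mp hx') ▸ hxJ
        exact hnotIJ (by
          rw [hIunion, hz]
          exact union_subset hss.1 (singleton_subset_iff.mpr hzJ))
  · obtain ⟨a, ha⟩ := Finset.card_eq_one.mp hA1
    have haJ : a ∈ J := by
      have hy' : y ∈ ({a} : Finset α) := ha ▸ hyA
      exact (mem_singleton.mp hy') ▸ hyJ
    rcases hB with hBF | hB1
    · rcases hF.2.2 J hJ (I \ b I) hBF hJB with hd | h2s | h2s
      · exact absurd hxB (Finset.disjoint_left.mp hd hxJ)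
      · exact (mem_sdiff.mp (h2s.1 hyJ)).2 hyA
      · refine hnotIJ (by
          rw [hIunion]
          refine union_subset ?_ h2s.1
          rw [ha]
          exact singleton_subset_iff.mpr haJ)
    · have hIle : I.card ≤ 2 := by
        calc I.card = (b I ∪ (I \ b I)).card := by rw [← hIunion]
          _ ≤ (b I).card + (I \ b I).card := card_union_le _ _
          _ ≤ 2 := by omega
      have := Finset.card_lt_card hJI
      omega

/-- If `A` belongs to the family, removing the losing sides of all games
inside `A` (including `A` itself) leaves exactly one element. -/
lemma side_card_one {α : Type*} [DecidableEq α] {L : Finset α} {F : Finset (Finset α)}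
    (hF : IsCommFamOn L F) {b : Finset α → Finset α} (hb : IsLosingMap F b) :
    ∀ n (A : Finset α), A.card ≤ n → A ∈ F →
      (A \ (F.filter (· ⊆ A)).biUnion b).card = 1 := by
  intro n
  induction n with
  | zero => intro A hA hAF; have := hF.2.1 A hAF; omega
  | succ n ih =>
    intro A hAn hAF
    obtain ⟨hsub, hne, hneq, _, hB⟩ := hb A hAF
    set B := A \ b A with hBdef
    have hBA : B ⊂ A := Finset.sdiff_ssubset hsub hne
    have hbAA : b A ⊂ A := ssubset_of_subset_of_ne hsub hneq
    have hset : A \ (F.filter (· ⊆ A)).biUnion b = B \ (F.filter (· ⊆ B)).biUnion b := by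
      ext x
      simp only [mem_sdiff, mem_biUnion, mem_filter, not_exists, not_and, hBdef]
      constructor
      · rintro ⟨hxA, hx⟩
        refine ⟨⟨hxA, hx A ⟨hAF, Subset.rfl⟩⟩, ?_⟩
        intro J hJ
        exact hx J ⟨hJ.1, hJ.2.trans sdiff_subset⟩
      · rintro ⟨⟨hxA, hxbA⟩, hx⟩
        refine ⟨hxA, ?_⟩
        rintro J ⟨hJF, hJA⟩
        rcases eq_or_ne J A with rfl | hne'
        · exact hxbA
        · rcases split_lemma hF hb hAF hJF (ssubset_of_subset_of_ne hJA hne') with h | h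
          · intro hxbJ
            exact hxbA (h ((hb J hJF).1 hxbJ))
          · exact hx J ⟨hJF, h⟩
    rw [hset]
    rcases hB with hBF | hB1
    · have hcard : B.card ≤ n := by
        have := Finset.card_lt_card hBA
        omega
      exact ih B hcard hBF
    · have hfilt : F.filter (· ⊆ B) = ∅ := by
        rw [Finset.filter_eq_empty_iff]
        intro J hJF hJB
        have h2 := hF.2.1 J hJF
        have := Finset.card_le_card hJB
        omega
      rw [hfilt, Finset.biUnion_empty, Finset.sdiff_empty]
      exact hB1

/-- A side (member of `F` or singleton) contributes exactly one player. -/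
lemma side_one {α : Type*} [DecidableEq α] {L : Finset α} {F : Finset (Finset α)}
    (hF : IsCommFamOn L F) {b : Finset α → Finset α} (hb : IsLosingMap F b)
    {A : Finset α} (hA : A ∈ F ∨ A.card = 1) :
    (A \ (F.filter (· ⊆ A)).biUnion b).card = 1 := by
  rcases hA with hAF | hA1
  · exact side_card_one hF hb A.card A le_rfl hAF
  · have hfilt : F.filter (· ⊆ A) = ∅ := by
      rw [Finset.filter_eq_empty_iff]
      intro J hJF hJA
      have h2 := hF.2.1 J hJF
      have := Finset.card_le_card hJA
      omega
    rw [hfilt, Finset.biUnion_empty, Finset.sdiff_empty]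
    exact hA1

/-- For each game `I` of the tournament, the set
`I_b̄ = I ∖ ⋃_{J ∈ F, J ⊊ I} b̄(J)` of its two players has exactly two elements. -/
theorem players_card_two {α : Type*} [DecidableEq α] (L : Finset α)
    (F : Finset (Finset α)) (hF : IsMaxCommFamOn L F)
    (b : Finset α → Finset α) (hb : IsLosingMap F b) :
    ∀ I ∈ F, (I \ (F.filter (· ⊂ I)).biUnion b).card = 2 := by
  intro I hI
  have hFc := hF.1
  obtain ⟨hsub, hne, hneq, hA, hB⟩ := hb I hI
  set A := b I with hAdef
  set B := I \ b I with hBdef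
  have hAI : A ⊂ I := ssubset_of_subset_of_ne hsub hneq
  have hBI : B ⊂ I := Finset.sdiff_ssubset hsub hne
  set S₁ := A \ (F.filter (· ⊆ A)).biUnion b with hS1
  set S₂ := B \ (F.filter (· ⊆ B)).biUnion b with hS2
  have hset : I \ (F.filter (· ⊂ I)).biUnion b = S₁ ∪ S₂ := by
    ext x
    simp only [hS1, hS2, mem_union, mem_sdiff, mem_biUnion, mem_filter, not_exists, not_and]
    constructor
    · rintro ⟨hxI, hx⟩
      rcases Finset.mem_union.mp (by
          rw [Finset.union_sdiff_of_subset hsub]; exact hxI :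
          x ∈ A ∪ B) with hxA | hxB
      · exact Or.inl ⟨hxA, fun J hJ => hx J ⟨hJ.1, lt_of_le_of_lt hJ.2 hAI⟩⟩
      · exact Or.inr ⟨hxB, fun J hJ => hx J ⟨hJ.1, lt_of_le_of_lt hJ.2 hBI⟩⟩
    · rintro (⟨hxA, hx⟩ | ⟨hxB, hx⟩)
      · refine ⟨hsub hxA, ?_⟩
        rintro J ⟨hJF, hJI⟩
        rcases split_lemma hFc hb hI hJF hJI with h | h
        · exact hx J ⟨hJF, h⟩
        · intro hxbJ
          have : x ∈ B := h ((hb J hJF).1 hxbJ)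
          exact (mem_sdiff.mp this).2 hxA
      · refine ⟨(mem_sdiff.mp hxB).1, ?_⟩
        rintro J ⟨hJF, hJI⟩
        rcases split_lemma hFc hb hI hJF hJI with h | h
        · intro hxbJ
          exact (mem_sdiff.mp hxB).2 (h ((hb J hJF).1 hxbJ))
        · exact hx J ⟨hJF, h⟩
  have hdisj : Disjoint S₁ S₂ :=
    Finset.disjoint_left.mpr fun x hx1 hx2 =>
      (mem_sdiff.mp (mem_sdiff.mp hx2).1).2 (mem_sdiff.mp hx1).1
  rw [hset, Finset.card_union_of_disjoint hdisj, side_one hFc hb hA, side_one hFc hb hB]
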